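/- Let d ≥ 1, and consider the deep decoder G with d layers. Assume ξ ≥ 0, μ ≥ 1, that the fixed input matrix satisfies ‖B₁‖_F ≤ ξ, and that every upsampling matrix satisfies ‖Uᵢ‖ ≤ 1 in spectral norm. Then for all coefficient tuples C = (C₁,…,C_{d−1},c_d) and C′ = (C₁′,…,C_{d−1}′,c_d′) in the μ-bounded set B_μ, the outputs satisfy ‖G(C) − G(C′)‖₂ ≤ ξ · μ^d · d · ( Σ_{i=1}^{d−1} ‖Cᵢ − Cᵢ′‖_F² + ‖c_d − c_d′‖₂² )^{1/2}. In particular, on B_μ the deep decoder is Lipschitz with constant ξ μ^d d when its coefficients are viewed as one Euclidean vector. -/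

import Mathlib

open Matrix Finset

/-- Euclidean (ℓ₂) norm of a vector. -/
noncomputable def euclNorm {ι : Type*} [Fintype ι] (v : ι → ℝ) : ℝ :=
  Real.sqrt (∑ i, v i ^ 2)

/-- Frobenius norm of a matrix. -/
noncomputable def frobNorm {ι κ : Type*} [Fintype ι] [Fintype κ] (A : Matrix ι κ ℝ) : ℝ :=
  Real.sqrt (∑ i, ∑ j, A i j ^ 2)

/-- Spectral (operator ℓ₂ → ℓ₂) norm of a matrix. -/
noncomputable def specNorm {ι κ : Type*} [Fintype ι] [Fintype κ] (A : Matrix ι κ ℝ) : ℝ :=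
  sSup {r : ℝ | ∃ v : κ → ℝ, euclNorm v ≤ 1 ∧ r = euclNorm (A *ᵥ v)}

/-- Entrywise ReLU of a matrix. -/
def reluM {ι κ : Type*} (A : Matrix ι κ ℝ) : Matrix ι κ ℝ :=
  Matrix.of fun i j => max (A i j) 0

variable {ι κ α : Type*} [Fintype ι] [Fintype κ] [Fintype α]

lemma euclNorm_nonneg (v : ι → ℝ) : 0 ≤ euclNorm v := Real.sqrt_nonneg _

lemma frobNorm_nonneg (A : Matrix ι κ ℝ) : 0 ≤ frobNorm A := Real.sqrt_nonneg _

lemma euclNorm_sq (v : ι → ℝ) : euclNorm v ^ 2 = ∑ i, v i ^ 2 :=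
  Real.sq_sqrt (by positivity)

lemma euclNorm_smul (a : ℝ) (v : ι → ℝ) : euclNorm (a • v) = |a| * euclNorm v := by
  unfold euclNorm
  simp only [Pi.smul_apply, smul_eq_mul, mul_pow, ← Finset.mul_sum]
  rw [Real.sqrt_mul (sq_nonneg a), Real.sqrt_sq_eq_abs]

lemma euclNorm_eq_zero {v : ι → ℝ} (h : euclNorm v = 0) : v = 0 := by
  have hsum : ∑ i, v i ^ 2 = 0 :=
    le_antisymm (Real.sqrt_eq_zero'.mp h) (by positivity)
  funext i
  have := (Finset.sum_eq_zero_iff_of_nonneg (fun i _ => sq_nonneg (v i))).mp hsum i (mem_univ i)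
  simpa [pow_eq_zero_iff] using this

lemma sum_mul_le_euclNorm (u v : ι → ℝ) : ∑ i, u i * v i ≤ euclNorm u * euclNorm v := by
  calc ∑ i, u i * v i ≤ |∑ i, u i * v i| := le_abs_self _
    _ = Real.sqrt ((∑ i, u i * v i) ^ 2) := (Real.sqrt_sq_eq_abs _).symm
    _ ≤ Real.sqrt ((∑ i, u i ^ 2) * ∑ i, v i ^ 2) :=
        Real.sqrt_le_sqrt (Finset.sum_mul_sq_le_sq_mul_sq _ _ _)
    _ = euclNorm u * euclNorm v := by
        unfold euclNorm; rw [Real.sqrt_mul (by positivity)]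

lemma euclNorm_add_le (u v : ι → ℝ) : euclNorm (u + v) ≤ euclNorm u + euclNorm v := by
  have ha := euclNorm_sq u
  have hb := euclNorm_sq v
  have h := sum_mul_le_euclNorm u v
  have hexp : ∑ i, (u i + v i) ^ 2
      = (∑ i, u i ^ 2) + 2 * (∑ i, u i * v i) + (∑ i, v i ^ 2) := by
    rw [Finset.mul_sum, ← Finset.sum_add_distrib, ← Finset.sum_add_distrib]
    exact Finset.sum_congr rfl fun i _ => by ring
  have key : ∑ i, (u i + v i) ^ 2 ≤ (euclNorm u + euclNorm v) ^ 2 := by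
    nlinarith [euclNorm_nonneg u, euclNorm_nonneg v]
  calc euclNorm (u + v) = Real.sqrt (∑ i, (u i + v i) ^ 2) := by
        unfold euclNorm; simp [Pi.add_apply]
    _ ≤ Real.sqrt ((euclNorm u + euclNorm v) ^ 2) := Real.sqrt_le_sqrt key
    _ = euclNorm u + euclNorm v :=
        Real.sqrt_sq (add_nonneg (euclNorm_nonneg u) (euclNorm_nonneg v))

lemma frobNorm_add_le (X Y : Matrix ι κ ℝ) : frobNorm (X + Y) ≤ frobNorm X + frobNorm Y := by
  have h : ∀ A : Matrix ι κ ℝ, frobNorm A = euclNorm (fun p : ι × κ => A p.1 p.2) := by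
    intro A; unfold frobNorm euclNorm; rw [Fintype.sum_prod_type]
  rw [h, h, h]
  have := euclNorm_add_le (fun p : ι × κ => X p.1 p.2) (fun p : ι × κ => Y p.1 p.2)
  exact this

lemma frobNorm_mono_abs {X Y : Matrix ι κ ℝ} (h : ∀ i j, |X i j| ≤ |Y i j|) :
    frobNorm X ≤ frobNorm Y := by
  unfold frobNorm
  apply Real.sqrt_le_sqrt
  apply Finset.sum_le_sum; intro i _
  apply Finset.sum_le_sum; intro j _
  calc X i j ^ 2 = |X i j| ^ 2 := (sq_abs _).symm
    _ ≤ |Y i j| ^ 2 := pow_le_pow_left₀ (abs_nonneg _) (h i j) 2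
    _ = Y i j ^ 2 := sq_abs _

lemma frobNorm_relu_sub_le (X Y : Matrix ι κ ℝ) :
    frobNorm (reluM X - reluM Y) ≤ frobNorm (X - Y) := by
  apply frobNorm_mono_abs
  intro i j
  simpa [reluM, Matrix.sub_apply] using abs_max_sub_max_le_abs (X i j) (Y i j) 0

lemma frobNorm_relu_le (X : Matrix ι κ ℝ) : frobNorm (reluM X) ≤ frobNorm X := by
  apply frobNorm_mono_abs
  intro i j
  simp only [reluM, Matrix.of_apply]
  rw [abs_of_nonneg (le_max_right _ _)]
  exact max_le (le_abs_self _) (abs_nonneg _)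

lemma euclNorm_mulVec_le (A : Matrix ι κ ℝ) (v : κ → ℝ) :
    euclNorm (A *ᵥ v) ≤ frobNorm A * euclNorm v := by
  unfold euclNorm frobNorm
  rw [← Real.sqrt_mul (by positivity)]
  apply Real.sqrt_le_sqrt
  rw [Finset.sum_mul]
  apply Finset.sum_le_sum; intro i _
  calc (A *ᵥ v) i ^ 2 = (∑ j, A i j * v j) ^ 2 := by
        simp [Matrix.mulVec, dotProduct]
    _ ≤ (∑ j, A i j ^ 2) * ∑ j, v j ^ 2 := Finset.sum_mul_sq_le_sq_mul_sq _ _ _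

lemma frobNorm_mul_le (A : Matrix ι κ ℝ) (B : Matrix κ α ℝ) :
    frobNorm (A * B) ≤ frobNorm A * frobNorm B := by
  unfold frobNorm
  rw [← Real.sqrt_mul (by positivity)]
  apply Real.sqrt_le_sqrt
  calc ∑ i, ∑ j, (A * B) i j ^ 2
      ≤ ∑ i, ∑ j, (∑ l, A i l ^ 2) * (∑ l, B l j ^ 2) := by
        apply Finset.sum_le_sum; intro i _
        apply Finset.sum_le_sum; intro j _
        calc (A * B) i j ^ 2 = (∑ l, A i l * B l j) ^ 2 := by rw [Matrix.mul_apply]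
          _ ≤ (∑ l, A i l ^ 2) * ∑ l, B l j ^ 2 := Finset.sum_mul_sq_le_sq_mul_sq _ _ _
    _ = (∑ i, ∑ l, A i l ^ 2) * ∑ j, ∑ l, B l j ^ 2 := by
        rw [Finset.sum_mul]
        exact Finset.sum_congr rfl fun i _ => by rw [← Finset.mul_sum]
    _ = (∑ i, ∑ l, A i l ^ 2) * ∑ l, ∑ j, B l j ^ 2 := by
        congr 1
        exact Finset.sum_comm

lemma specSet_bddAbove (U : Matrix ι κ ℝ) :
    BddAbove {r : ℝ | ∃ v : κ → ℝ, euclNorm v ≤ 1 ∧ r = euclNorm (U *ᵥ v)} := by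
  refine ⟨frobNorm U, ?_⟩
  rintro r ⟨w, hw, rfl⟩
  calc euclNorm (U *ᵥ w) ≤ frobNorm U * euclNorm w := euclNorm_mulVec_le U w
    _ ≤ frobNorm U * 1 := mul_le_mul_of_nonneg_left hw (frobNorm_nonneg U)
    _ = frobNorm U := mul_one _

lemma euclNorm_zero : euclNorm (0 : ι → ℝ) = 0 := by
  unfold euclNorm; simp

lemma specNorm_nonneg (U : Matrix ι κ ℝ) : 0 ≤ specNorm U := by
  apply le_csSup (specSet_bddAbove U)
  exact ⟨0, by rw [euclNorm_zero]; norm_num, by rw [Matrix.mulVec_zero, euclNorm_zero]⟩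

lemma euclNorm_mulVec_le_spec (U : Matrix ι κ ℝ) (v : κ → ℝ) :
    euclNorm (U *ᵥ v) ≤ specNorm U * euclNorm v := by
  by_cases h0 : euclNorm v = 0
  · rw [euclNorm_eq_zero h0]
    simp [Matrix.mulVec_zero, euclNorm_zero]
  · have ht : 0 < euclNorm v := lt_of_le_of_ne (euclNorm_nonneg v) (Ne.symm h0)
    set t := euclNorm v with htdef
    have hw : euclNorm (t⁻¹ • v) = 1 := by
      rw [euclNorm_smul, abs_of_pos (inv_pos.2 ht), ← htdef, inv_mul_cancel₀ (ne_of_gt ht)]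
    have hle : euclNorm (U *ᵥ (t⁻¹ • v)) ≤ specNorm U :=
      le_csSup (specSet_bddAbove U) ⟨t⁻¹ • v, le_of_eq hw, rfl⟩
    rw [Matrix.mulVec_smul, euclNorm_smul, abs_of_pos (inv_pos.2 ht)] at hle
    calc euclNorm (U *ᵥ v) = t * (t⁻¹ * euclNorm (U *ᵥ v)) := by
          rw [← mul_assoc, mul_inv_cancel₀ (ne_of_gt ht), one_mul]
      _ ≤ t * specNorm U := mul_le_mul_of_nonneg_left hle ht.le
      _ = specNorm U * t := mul_comm _ _

lemma frobNorm_mul_le_spec (U : Matrix ι κ ℝ) (M : Matrix κ α ℝ) :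
    frobNorm (U * M) ≤ specNorm U * frobNorm M := by
  have hs := specNorm_nonneg U
  have hcol : ∀ j, ∑ i, (U * M) i j ^ 2 = euclNorm (U *ᵥ fun l => M l j) ^ 2 := by
    intro j
    rw [euclNorm_sq]
    apply Finset.sum_congr rfl; intro i _
    simp [Matrix.mul_apply, Matrix.mulVec, dotProduct]
  calc frobNorm (U * M) = Real.sqrt (∑ j, euclNorm (U *ᵥ fun l => M l j) ^ 2) := by
        unfold frobNorm
        rw [Finset.sum_comm]
        exact congrArg Real.sqrt (Finset.sum_congr rfl fun j _ => hcol j)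
    _ ≤ Real.sqrt (∑ j, (specNorm U * euclNorm fun l => M l j) ^ 2) := by
        apply Real.sqrt_le_sqrt
        apply Finset.sum_le_sum; intro j _
        exact pow_le_pow_left₀ (euclNorm_nonneg _) (euclNorm_mulVec_le_spec _ _) 2
    _ = specNorm U * frobNorm M := by
        rw [show (∑ j, (specNorm U * euclNorm fun l => M l j) ^ 2)
            = specNorm U ^ 2 * ∑ j, ∑ l, M l j ^ 2 by
          rw [Finset.mul_sum]
          exact Finset.sum_congr rfl fun j _ => by rw [mul_pow, euclNorm_sq]]
        rw [Real.sqrt_mul (sq_nonneg _), Real.sqrt_sq hs]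
        congr 1
        unfold frobNorm
        rw [Finset.sum_comm]

set_option maxHeartbeats 1000000 in
/-- The deep decoder with `d` layers (layers indexed `0, …, d-1`, so that
`B 0` is the fixed input `B₁` and the output is `G(C) = B (d-1) *ᵥ c`) is
`ξ μ^d d`-Lipschitz on the set of `μ`-bounded coefficients, when the coefficients
are viewed as one Euclidean vector. -/
theorem deep_decoder_lipschitz
    (d k : ℕ) (hd : 1 ≤ d) (n : ℕ → ℕ)
    (ξ μ : ℝ) (hξ : 0 ≤ ξ) (hμ : 1 ≤ μ)
    (U : ∀ i : ℕ, Matrix (Fin (n (i + 1))) (Fin (n i)) ℝ)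
    (hU : ∀ i, i < d - 1 → specNorm (U i) ≤ 1)
    (B B' : ∀ i : ℕ, Matrix (Fin (n i)) (Fin k) ℝ)
    (C C' : ℕ → Matrix (Fin k) (Fin k) ℝ)
    (c c' : Fin k → ℝ)
    (hB1 : frobNorm (B 0) ≤ ξ) (hBB' : B' 0 = B 0)
    (hrec : ∀ i, i < d - 1 → B (i + 1) = reluM (U i * B i * C i))
    (hrec' : ∀ i, i < d - 1 → B' (i + 1) = reluM (U i * B' i * C' i))
    (hC : ∀ i, i < d - 1 → frobNorm (C i) ≤ μ) (hc : euclNorm c ≤ μ)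
    (hC' : ∀ i, i < d - 1 → frobNorm (C' i) ≤ μ) (hc' : euclNorm c' ≤ μ) :
    euclNorm (B (d - 1) *ᵥ c - B' (d - 1) *ᵥ c') ≤
      ξ * μ ^ d * d *
        Real.sqrt ((∑ i ∈ Finset.range (d - 1), frobNorm (C i - C' i) ^ 2)
          + euclNorm (c - c') ^ 2) := by
  obtain ⟨m, rfl⟩ : ∃ m, d = m + 1 := ⟨d - 1, (Nat.succ_pred_eq_of_pos hd).symm⟩
  simp only [Nat.add_sub_cancel] at hU hrec hrec' hC hC' ⊢
  have hμ0 : (0 : ℝ) ≤ μ := le_trans zero_le_one hμ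
  -- main induction on layers
  have key : ∀ i, i ≤ m →
      frobNorm (B i) ≤ ξ * μ ^ i ∧ frobNorm (B' i) ≤ ξ * μ ^ i ∧
      frobNorm (B i - B' i) ≤ ξ * μ ^ i * ∑ j ∈ Finset.range i, frobNorm (C j - C' j) := by
    intro i
    induction i with
    | zero =>
      intro _
      refine ⟨by simpa using hB1, by simpa [hBB'] using hB1, ?_⟩
      simp [hBB', frobNorm]
    | succ i ih =>
      intro hi
      have hi' : i < m := hi
      obtain ⟨h1, h2, h3⟩ := ih (le_of_lt hi')
      have hCi := hC i hi'
      have hCi' := hC' i hi'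
      have hμi : μ ^ i ≤ μ ^ (i + 1) := by
        rw [pow_succ]
        nlinarith [pow_nonneg hμ0 i]
      have hSnn : (0:ℝ) ≤ ∑ j ∈ Finset.range i, frobNorm (C j - C' j) :=
        Finset.sum_nonneg fun _ _ => frobNorm_nonneg _
      have hξμi : (0:ℝ) ≤ ξ * μ ^ i := mul_nonneg hξ (pow_nonneg hμ0 i)
      have bound : ∀ X : Matrix (Fin (n i)) (Fin k) ℝ, ∀ D : Matrix (Fin k) (Fin k) ℝ,
          frobNorm X ≤ ξ * μ ^ i → frobNorm D ≤ μ →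
          frobNorm (reluM (U i * X * D)) ≤ ξ * μ ^ (i + 1) := by
        intro X D hX hD
        calc frobNorm (reluM (U i * X * D)) ≤ frobNorm (U i * X * D) := frobNorm_relu_le _
          _ = frobNorm (U i * (X * D)) := by rw [Matrix.mul_assoc]
          _ ≤ specNorm (U i) * frobNorm (X * D) := frobNorm_mul_le_spec _ _
          _ ≤ 1 * (frobNorm X * frobNorm D) :=
              mul_le_mul (hU i hi') (frobNorm_mul_le _ _) (frobNorm_nonneg _) zero_le_one
          _ ≤ 1 * ((ξ * μ ^ i) * μ) := by
              rw [one_mul, one_mul]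
              exact mul_le_mul hX hD (frobNorm_nonneg _) hξμi
          _ = ξ * μ ^ (i + 1) := by ring
      rw [hrec i hi', hrec' i hi']
      refine ⟨bound _ _ h1 hCi, bound _ _ h2 hCi', ?_⟩
      have hsplit : U i * B i * C i - U i * B' i * C' i
          = U i * ((B i - B' i) * C i + B' i * (C i - C' i)) := by
        rw [Matrix.mul_add,
          show U i * ((B i - B' i) * C i) = U i * B i * C i - U i * B' i * C i by
            rw [Matrix.sub_mul, Matrix.mul_sub, ← Matrix.mul_assoc, ← Matrix.mul_assoc],
          show U i * (B' i * (C i - C' i)) = U i * B' i * C i - U i * B' i * C' i by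
            simp only [Matrix.mul_sub, ← Matrix.mul_assoc]]
        abel
      calc frobNorm (reluM (U i * B i * C i) - reluM (U i * B' i * C' i))
          ≤ frobNorm (U i * B i * C i - U i * B' i * C' i) := frobNorm_relu_sub_le _ _
        _ = frobNorm (U i * ((B i - B' i) * C i + B' i * (C i - C' i))) := by rw [hsplit]
        _ ≤ specNorm (U i) * frobNorm ((B i - B' i) * C i + B' i * (C i - C' i)) :=
            frobNorm_mul_le_spec _ _
        _ ≤ 1 * (frobNorm ((B i - B' i) * C i) + frobNorm (B' i * (C i - C' i))) :=
            mul_le_mul (hU i hi') (frobNorm_add_le _ _) (frobNorm_nonneg _) zero_le_one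
        _ ≤ 1 * ((ξ * μ ^ i * ∑ j ∈ Finset.range i, frobNorm (C j - C' j)) * μ
              + (ξ * μ ^ i) * frobNorm (C i - C' i)) := by
            rw [one_mul, one_mul]
            refine add_le_add ?_ ?_
            · exact le_trans (frobNorm_mul_le _ _)
                (mul_le_mul h3 hCi (frobNorm_nonneg _) (mul_nonneg hξμi hSnn))
            · exact le_trans (frobNorm_mul_le _ _)
                (mul_le_mul_of_nonneg_right h2 (frobNorm_nonneg _))
        _ ≤ ξ * μ ^ (i + 1) * ∑ j ∈ Finset.range (i + 1), frobNorm (C j - C' j) := by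
            rw [one_mul, Finset.sum_range_succ]
            have hδ : (0:ℝ) ≤ frobNorm (C i - C' i) := frobNorm_nonneg _
            have e2 : ξ * μ ^ i * frobNorm (C i - C' i)
                ≤ ξ * μ ^ (i + 1) * frobNorm (C i - C' i) :=
              mul_le_mul_of_nonneg_right (mul_le_mul_of_nonneg_left hμi hξ) hδ
            have e1 : (ξ * μ ^ i * ∑ j ∈ Finset.range i, frobNorm (C j - C' j)) * μ
                = ξ * μ ^ (i + 1) * ∑ j ∈ Finset.range i, frobNorm (C j - C' j) := by
              ring
            rw [e1, mul_add]
            linarith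
  obtain ⟨hB1d, hB2d, hDd⟩ := key m le_rfl
  set S := ∑ j ∈ Finset.range m, frobNorm (C j - C' j) with hSdef
  set e := euclNorm (c - c') with hedef
  have hS : 0 ≤ S := Finset.sum_nonneg fun _ _ => frobNorm_nonneg _
  have he : 0 ≤ e := euclNorm_nonneg _
  have hpow : μ ^ m * μ = μ ^ (m + 1) := (pow_succ μ m).symm
  have hpowle : μ ^ m ≤ μ ^ (m + 1) := by
    rw [pow_succ]; nlinarith [pow_nonneg hμ0 m]
  have step1 : euclNorm (B m *ᵥ c - B' m *ᵥ c') ≤ ξ * μ ^ (m + 1) * (S + e) := by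
    have hsplit : B m *ᵥ c - B' m *ᵥ c'
        = (B m - B' m) *ᵥ c + B' m *ᵥ (c - c') := by
      rw [Matrix.sub_mulVec, Matrix.mulVec_sub]
      abel
    rw [hsplit]
    calc euclNorm ((B m - B' m) *ᵥ c + B' m *ᵥ (c - c'))
        ≤ euclNorm ((B m - B' m) *ᵥ c) + euclNorm (B' m *ᵥ (c - c')) := euclNorm_add_le _ _
      _ ≤ frobNorm (B m - B' m) * euclNorm c + frobNorm (B' m) * e :=
          add_le_add (euclNorm_mulVec_le _ _) (euclNorm_mulVec_le _ _)
      _ ≤ (ξ * μ ^ m * S) * μ + (ξ * μ ^ m) * e := by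
          refine add_le_add ?_ (mul_le_mul_of_nonneg_right hB2d he)
          exact mul_le_mul hDd hc (euclNorm_nonneg _)
            (mul_nonneg (mul_nonneg hξ (pow_nonneg hμ0 m)) hS)
      _ ≤ ξ * μ ^ (m + 1) * (S + e) := by
          have e2 : ξ * μ ^ m * e ≤ ξ * μ ^ (m + 1) * e :=
            mul_le_mul_of_nonneg_right (mul_le_mul_of_nonneg_left hpowle hξ) he
          have e1 : (ξ * μ ^ m * S) * μ = ξ * μ ^ (m + 1) * S := by ring
          rw [mul_add]
          linarith
  -- Cauchy–Schwarz step
  set Q := (∑ i ∈ Finset.range m, frobNorm (C i - C' i) ^ 2) + e ^ 2 with hQdef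
  have step2 : S + e ≤ (m + 1 : ℝ) * Real.sqrt Q := by
    set g : ℕ → ℝ := fun j => if j < m then frobNorm (C j - C' j) else e with hg
    have hg1 : ∑ j ∈ Finset.range (m + 1), g j = S + e := by
      rw [Finset.sum_range_succ]
      congr 1
      · exact Finset.sum_congr rfl fun j hj => by simp [hg, Finset.mem_range.mp hj]
      · simp [hg]
    have hg2 : ∑ j ∈ Finset.range (m + 1), g j ^ 2 = Q := by
      rw [Finset.sum_range_succ, hQdef]
      congr 1
      · exact Finset.sum_congr rfl fun j hj => by simp [hg, Finset.mem_range.mp hj]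
      · simp [hg]
    have hQnn : 0 ≤ Q := by
      rw [hQdef]
      exact add_nonneg (Finset.sum_nonneg fun _ _ => sq_nonneg _) (sq_nonneg _)
    have hcs : (S + e) ^ 2 ≤ (m + 1 : ℝ) * Q := by
      rw [← hg1, ← hg2]
      have := sq_sum_le_card_mul_sum_sq (s := Finset.range (m + 1)) (f := g)
      simpa [Finset.card_range] using this
    have h1 : S + e ≤ Real.sqrt ((m + 1 : ℝ) * Q) :=
      (Real.le_sqrt (add_nonneg hS he) (mul_nonneg (by positivity) hQnn)).mpr hcs
    exact le_trans h1 (by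
      rw [Real.sqrt_mul (show (0:ℝ) ≤ (m:ℝ) + 1 by positivity) Q]
      have hm1 : (1:ℝ) ≤ (m:ℝ) + 1 := by linarith [Nat.cast_nonneg (α := ℝ) m]
      have : Real.sqrt ((m:ℝ) + 1) ≤ (m:ℝ) + 1 := by
        calc Real.sqrt ((m:ℝ) + 1) ≤ Real.sqrt (((m:ℝ) + 1) ^ 2) :=
              Real.sqrt_le_sqrt (by nlinarith)
          _ = (m:ℝ) + 1 := Real.sqrt_sq (by positivity)
      exact mul_le_mul_of_nonneg_right this (Real.sqrt_nonneg _))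
  calc euclNorm (B m *ᵥ c - B' m *ᵥ c') ≤ ξ * μ ^ (m + 1) * (S + e) := step1
    _ ≤ ξ * μ ^ (m + 1) * ((m + 1 : ℝ) * Real.sqrt Q) :=
        mul_le_mul_of_nonneg_left step2 (mul_nonneg hξ (pow_nonneg hμ0 _))
    _ = ξ * μ ^ (m + 1) * ((m : ℝ) + 1) * Real.sqrt Q := by ring
    _ = ξ * μ ^ (m + 1) * ((m + 1 : ℕ) : ℝ) * Real.sqrt Q := by push_cast; ring
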